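/- For n ∈ ℕ define the shifted Legendre polynomial R_n(x) = ∑_{j=0}^{n} C(n,j)² (x−1)^{n−j} x^j, where C(n,j) is the binomial coefficient. Then for all m, n ∈ ℕ, ∫₀¹ R_n(x) R_m(x) dx = δ_{mn}/(2n+1), where δ_{mn} is the Kronecker delta. -/

import Mathlib

open Finset intervalIntegral

lemma beta_nat (b : ℕ) : ∀ a : ℕ, ∫ x in (0:ℝ)..1, (x-1)^a * x^b =
    (-1)^a * (a.factorial * b.factorial) / (a+b+1).factorial := by
  induction b with
  | zero =>
    intro a
    have h1 : (a.factorial:ℝ) ≠ 0 := by positivity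
    simp only [pow_zero, mul_one]
    rw [intervalIntegral.integral_comp_sub_right (fun x : ℝ => x^a) 1]
    rw [integral_pow]
    simp [Nat.factorial_succ]
    rw [pow_succ]
    field_simp
  | succ b ih =>
    intro a
    have key : ∫ x in (0:ℝ)..1,
        ((a+1:ℝ)*((x-1)^a*x^(b+1)) + (b+1:ℝ)*((x-1)^(a+1)*x^b)) = 0 := by
      have : ∀ x ∈ Set.uIcc (0:ℝ) 1, HasDerivAt (fun y : ℝ => (y-1)^(a+1)*y^(b+1))
          ((a+1:ℝ)*((x-1)^a*x^(b+1)) + (b+1:ℝ)*((x-1)^(a+1)*x^b)) x := by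
        intro x _
        have h1 : HasDerivAt (fun y : ℝ => (y-1)^(a+1)) ((a+1:ℝ)*(x-1)^a) x := by
          simpa [Function.comp_def] using ((hasDerivAt_pow (a+1) (x-1)).comp x ((hasDerivAt_id x).sub_const 1))
        have h2 : HasDerivAt (fun y : ℝ => y^(b+1)) ((b+1:ℝ)*x^b) x := by
          simpa using hasDerivAt_pow (b+1) x
        have := h1.mul h2
        exact this.congr_deriv (by ring)
      rw [intervalIntegral.integral_eq_sub_of_hasDerivAt this
        (Continuous.intervalIntegrable (by continuity) _ _)]
      simp
    rw [intervalIntegral.integral_add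
        (Continuous.intervalIntegrable (by continuity) _ _)
        (Continuous.intervalIntegrable (by continuity) _ _),
      intervalIntegral.integral_const_mul, intervalIntegral.integral_const_mul] at key
    have ha : ((a:ℝ)+1) ≠ 0 := by positivity
    have heq : ∫ x in (0:ℝ)..1, (x-1)^a * x^(b+1)
        = -((b:ℝ)+1)/((a:ℝ)+1) * ∫ x in (0:ℝ)..1, (x-1)^(a+1)*x^b := by
      field_simp
      linarith [key]
    rw [heq, ih (a+1)]
    rw [show a+1+b+1 = a+(b+1)+1 by omega]
    have h2 : ((a+(b+1)+1).factorial : ℝ) ≠ 0 := by positivity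
    push_cast [Nat.factorial_succ]
    field_simp
    ring

open fwdDiff in
lemma key_sum (n k : ℕ) (hk : k ≤ n) :
    ∑ j ∈ range (n+1), (-1:ℤ)^(n-j) * (n.choose j) * ((j+k).choose k) =
      if k = n then 1 else 0 := by
  have inner : ∀ i : ℕ, ∑ j ∈ range (n+1), (-1:ℤ)^(n-j) * (n.choose j) * (j.choose i) =
      if n = i then 1 else 0 := by
    intro i
    have H := fwdDiff_iter_eq_sum_shift (M := ℕ) (G := ℤ) 1 (fun x : ℕ => (x.choose i : ℤ)) n 0
    rw [fwdDiff_iter_choose_zero] at H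
    rw [H]
    apply Finset.sum_congr rfl
    intro j _
    simp [smul_eq_mul, mul_assoc]
  have vand : ∀ j : ℕ, ((j+k).choose k : ℤ) =
      ∑ i ∈ range (k+1), (j.choose i : ℤ) * (k.choose (k-i)) := by
    intro j
    rw [Nat.add_choose_eq, Finset.Nat.sum_antidiagonal_eq_sum_range_succ_mk]
    push_cast
    rfl
  calc ∑ j ∈ range (n+1), (-1:ℤ)^(n-j) * (n.choose j) * ((j+k).choose k)
      = ∑ j ∈ range (n+1), ∑ i ∈ range (k+1),
          (k.choose (k-i) : ℤ) * ((-1:ℤ)^(n-j) * (n.choose j) * (j.choose i)) := by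
        refine Finset.sum_congr rfl fun j _ => ?_
        rw [vand j, Finset.mul_sum]
        exact Finset.sum_congr rfl fun i _ => by ring
    _ = ∑ i ∈ range (k+1), (k.choose (k-i) : ℤ) *
          ∑ j ∈ range (n+1), (-1:ℤ)^(n-j) * (n.choose j) * (j.choose i) := by
        rw [Finset.sum_comm]
        exact Finset.sum_congr rfl fun i _ => by rw [Finset.mul_sum]
    _ = ∑ i ∈ range (k+1), (k.choose (k-i) : ℤ) * (if n = i then 1 else 0) := by
        exact Finset.sum_congr rfl fun i _ => by rw [inner i]
    _ = if k = n then 1 else 0 := by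
        rcases eq_or_lt_of_le hk with rfl | hlt
        · rw [Finset.sum_eq_single k]
          · simp
          · intro i hi hne
            simp [Ne.symm hne]
          · simp
        · rw [if_neg hlt.ne, Finset.sum_eq_zero]
          intro i hi
          rw [Finset.mem_range] at hi
          rw [if_neg (by omega), mul_zero]

lemma int_R_pow (n k : ℕ) (hk : k ≤ n) :
    ∫ x in (0:ℝ)..1,
      (∑ j ∈ range (n+1), (n.choose j : ℝ)^2 * (x-1)^(n-j) * x^j) * x^k =
    if k = n then ((n.factorial : ℝ))^2 / ((2*n+1).factorial) else 0 := by
  have hrw : (fun x : ℝ => (∑ j ∈ range (n+1), (n.choose j : ℝ)^2 * (x-1)^(n-j) * x^j) * x^k)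
      = fun x : ℝ => ∑ j ∈ range (n+1), (n.choose j : ℝ)^2 * ((x-1)^(n-j) * x^(j+k)) := by
    funext x
    rw [Finset.sum_mul]
    exact Finset.sum_congr rfl fun j _ => by rw [pow_add]; ring
  rw [hrw, intervalIntegral.integral_finset_sum
    (fun j _ => Continuous.intervalIntegrable (by continuity) _ _)]
  simp_rw [intervalIntegral.integral_const_mul, beta_nat]
  have hterm : ∀ j ∈ range (n+1), (n.choose j : ℝ)^2 *
      ((-1:ℝ)^(n-j) * ((n-j).factorial * (j+k).factorial) / ((n-j)+(j+k)+1).factorial)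
      = ((n.factorial : ℝ) * k.factorial / (n+k+1).factorial) *
        (((-1:ℤ)^(n-j) * (n.choose j) * ((j+k).choose k) : ℤ) : ℝ) := by
    intro j hj
    rw [Finset.mem_range] at hj
    have hjn : j ≤ n := by omega
    rw [show (n-j)+(j+k)+1 = n+k+1 by omega]
    push_cast
    rw [Nat.cast_choose ℝ hjn, Nat.cast_choose ℝ (Nat.le_add_left k j)]
    rw [show j + k - k = j by omega]
    have h1 : (j.factorial : ℝ) ≠ 0 := by positivity
    have h2 : ((n-j).factorial : ℝ) ≠ 0 := by positivity
    have h3 : (k.factorial : ℝ) ≠ 0 := by positivity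
    have h4 : ((n+k+1).factorial : ℝ) ≠ 0 := by positivity
    field_simp
  rw [Finset.sum_congr rfl hterm, ← Finset.mul_sum]
  have : ∑ j ∈ range (n+1), (((-1:ℤ)^(n-j) * (n.choose j) * ((j+k).choose k) : ℤ) : ℝ)
      = (((if k = n then 1 else 0 : ℤ)) : ℝ) := by
    rw [← Int.cast_sum, key_sum n k hk]
  rw [this]
  split_ifs with h
  · subst h
    rw [show 2*k+1 = k+k+1 by omega]
    push_cast
    ring
  · simp

lemma int_R_mul (n a b : ℕ) (h : a + b ≤ n) :
    ∫ x in (0:ℝ)..1,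
      (∑ j ∈ range (n+1), (n.choose j : ℝ)^2 * (x-1)^(n-j) * x^j) * ((x-1)^a * x^b) =
    if a + b = n then ((n.factorial : ℝ))^2 / ((2*n+1).factorial) else 0 := by
  have hrw : (fun x : ℝ =>
      (∑ j ∈ range (n+1), (n.choose j : ℝ)^2 * (x-1)^(n-j) * x^j) * ((x-1)^a * x^b))
      = fun x : ℝ => ∑ i ∈ range (a+1), ((-1:ℝ)^(a-i) * (a.choose i)) *
          ((∑ j ∈ range (n+1), (n.choose j : ℝ)^2 * (x-1)^(n-j) * x^j) * x^(i+b)) := by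
    funext x
    have hx : (x-1:ℝ)^a = ∑ i ∈ range (a+1), x^i * (-1:ℝ)^(a-i) * (a.choose i) := by
      rw [show (x-1:ℝ) = x + (-1) by ring, add_pow]
    have haux : ∀ S : ℝ, S * ((∑ i ∈ range (a+1), x^i * (-1:ℝ)^(a-i) * (a.choose i)) * x^b)
        = ∑ i ∈ range (a+1), ((-1:ℝ)^(a-i) * (a.choose i)) * (S * x^(i+b)) := by
      intro S
      rw [Finset.sum_mul, Finset.mul_sum]
      exact Finset.sum_congr rfl fun i _ => by rw [pow_add]; ring
    rw [hx, haux]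
  rw [hrw, intervalIntegral.integral_finset_sum
    (fun i _ => Continuous.intervalIntegrable (by continuity) _ _)]
  simp_rw [intervalIntegral.integral_const_mul]
  have hterm : ∀ i ∈ range (a+1), ((-1:ℝ)^(a-i) * (a.choose i)) *
      (∫ x in (0:ℝ)..1,
        (∑ j ∈ range (n+1), (n.choose j : ℝ)^2 * (x-1)^(n-j) * x^j) * x^(i+b))
      = ((-1:ℝ)^(a-i) * (a.choose i)) *
        (if i + b = n then ((n.factorial : ℝ))^2 / ((2*n+1).factorial) else 0) := by
    intro i hi
    rw [Finset.mem_range] at hi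
    rw [int_R_pow n (i+b) (by omega)]
  rw [Finset.sum_congr rfl hterm]
  by_cases hab : a + b = n
  · rw [if_pos hab, Finset.sum_eq_single a]
    · simp [hab]
    · intro i hi hne
      rw [Finset.mem_range] at hi
      rw [if_neg (by omega), mul_zero]
    · simp
  · rw [if_neg hab, Finset.sum_eq_zero]
    intro i hi
    rw [Finset.mem_range] at hi
    rw [if_neg (by omega), mul_zero]

lemma main_le (n m : ℕ) (h : m ≤ n) :
    ∫ x in (0:ℝ)..1,
        (∑ j ∈ Finset.range (n + 1), (n.choose j : ℝ) ^ 2 * (x - 1) ^ (n - j) * x ^ j) *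
        (∑ j ∈ Finset.range (m + 1), (m.choose j : ℝ) ^ 2 * (x - 1) ^ (m - j) * x ^ j) =
      if m = n then 1 / (2 * (n : ℝ) + 1) else 0 := by
  have hrw : (fun x : ℝ =>
      (∑ j ∈ range (n+1), (n.choose j : ℝ)^2 * (x-1)^(n-j) * x^j) *
      (∑ j ∈ range (m+1), (m.choose j : ℝ)^2 * (x-1)^(m-j) * x^j))
      = fun x : ℝ => ∑ k ∈ range (m+1), (m.choose k : ℝ)^2 *
          ((∑ j ∈ range (n+1), (n.choose j : ℝ)^2 * (x-1)^(n-j) * x^j) *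
            ((x-1)^(m-k) * x^k)) := by
    funext x
    rw [Finset.mul_sum]
    exact Finset.sum_congr rfl fun k _ => by ring
  rw [hrw, intervalIntegral.integral_finset_sum
    (fun k _ => Continuous.intervalIntegrable (by continuity) _ _)]
  simp_rw [intervalIntegral.integral_const_mul]
  have hterm : ∀ k ∈ range (m+1), (m.choose k : ℝ)^2 *
      (∫ x in (0:ℝ)..1,
        (∑ j ∈ range (n+1), (n.choose j : ℝ)^2 * (x-1)^(n-j) * x^j) * ((x-1)^(m-k) * x^k))
      = (m.choose k : ℝ)^2 *
        (if m = n then ((n.factorial : ℝ))^2 / ((2*n+1).factorial) else 0) := by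
    intro k hk
    rw [Finset.mem_range] at hk
    rw [int_R_mul n (m-k) k (by omega), show m - k + k = m by omega]
  rw [Finset.sum_congr rfl hterm]
  by_cases hmn : m = n
  · subst hmn
    rw [if_pos rfl, if_pos rfl, ← Finset.sum_mul]
    have hsq : ∑ k ∈ range (m+1), (m.choose k : ℝ)^2 = ((2*m).choose m : ℝ) := by
      rw [show 2*m = m + m by ring, Nat.add_choose_eq,
        Finset.Nat.sum_antidiagonal_eq_sum_range_succ_mk]
      push_cast
      exact Finset.sum_congr rfl fun i hi => by
        rw [Finset.mem_range] at hi
        rw [Nat.choose_symm (by omega), sq]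
    rw [hsq]
    have hc : ((2*m).choose m : ℝ) * (m.factorial : ℝ)^2 = ((2*m).factorial : ℝ) := by
      have := Nat.choose_mul_factorial_mul_factorial (show m ≤ 2*m by omega)
      rw [show 2*m - m = m by omega] at this
      push_cast [← this]
      ring
    rw [show (2*m+1).factorial = (2*m+1) * (2*m).factorial from Nat.factorial_succ _]
    have h1 : ((2*m).factorial : ℝ) ≠ 0 := by positivity
    have h2 : (2*(m:ℝ)+1) ≠ 0 := by positivity
    push_cast
    rw [show ((2*m).choose m : ℝ) * ((m.factorial:ℝ)^2 / ((2*(m:ℝ)+1) * ((2*m).factorial:ℝ)))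
        = (((2*m).choose m : ℝ) * (m.factorial:ℝ)^2) / ((2*(m:ℝ)+1) * ((2*m).factorial:ℝ)) by
      ring]
    push_cast at hc
    rw [hc, mul_comm (2*(m:ℝ)+1), ← div_div, div_self h1, one_div]
  · rw [if_neg hmn, if_neg hmn]
    simp


/-- Orthogonality of the shifted Legendre polynomials
`R_n(x) = ∑_{j=0}^n C(n,j)² (x−1)^{n−j} xʲ` on [0,1]:
`∫₀¹ R_n R_m = δ_{mn}/(2n+1)`. -/
theorem shiftedLegendre_orthogonality (n m : ℕ) :
    ∫ x in (0:ℝ)..1,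
        (∑ j ∈ Finset.range (n + 1), (n.choose j : ℝ) ^ 2 * (x - 1) ^ (n - j) * x ^ j) *
        (∑ j ∈ Finset.range (m + 1), (m.choose j : ℝ) ^ 2 * (x - 1) ^ (m - j) * x ^ j) =
      if m = n then 1 / (2 * (n : ℝ) + 1) else 0 := by
  rcases le_total m n with h | h
  · exact main_le n m h
  · have hcomm : (∫ x in (0:ℝ)..1,
        (∑ j ∈ Finset.range (n + 1), (n.choose j : ℝ) ^ 2 * (x - 1) ^ (n - j) * x ^ j) *
        (∑ j ∈ Finset.range (m + 1), (m.choose j : ℝ) ^ 2 * (x - 1) ^ (m - j) * x ^ j))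
        = ∫ x in (0:ℝ)..1,
        (∑ j ∈ Finset.range (m + 1), (m.choose j : ℝ) ^ 2 * (x - 1) ^ (m - j) * x ^ j) *
        (∑ j ∈ Finset.range (n + 1), (n.choose j : ℝ) ^ 2 * (x - 1) ^ (n - j) * x ^ j) := by
      exact intervalIntegral.integral_congr fun x _ => mul_comm _ _
    rw [hcomm, main_le m n h]
    by_cases hmn : m = n
    · subst hmn
      simp
    · simp [hmn, Ne.symm hmn]
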